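/- Let T be a rooted binary tree with N leaves, let A₁,…,A_k be pairwise disjoint subsets of {1,…,N} with |A_i| = a_i, let n ≥ 1 be a natural number, and let the leaves of T be labeled by a uniformly random bijection from the leaf positions of T to {1,…,N}. Then the probability that there exists a vertex v of T with at least n descendant leaves and an index i such that every descendant leaf of v receives a label in A_i is at most ∑_{i=1}^{k} ∑_{m=n}^{a_i} choose(a_i,m)/choose(N−1,m−1). -/

import Mathlib

/-- A rooted binary tree: a leaf, or an internal node with two subtrees. -/
inductive RBT : Type
  | leaf : RBT
  | node : RBT → RBT → RBT

namespace RBT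

/-- The number of leaves of a rooted binary tree. -/
def numLeaves : RBT → ℕ
  | leaf => 1
  | node l r => l.numLeaves + r.numLeaves

/-- The paths (from the root) of all leaves of a rooted binary tree. -/
def leafPaths : RBT → List (List Bool)
  | leaf => [[]]
  | node l r => (l.leafPaths.map (false :: ·)) ++ (r.leafPaths.map (true :: ·))

/-- The paths (from the root) of all vertices of a rooted binary tree. -/
def vertexPaths : RBT → List (List Bool)
  | leaf => [[]]
  | node l r => [] :: ((l.vertexPaths.map (false :: ·)) ++ (r.vertexPaths.map (true :: ·)))

/-- The descendant leaves of the vertex of `t` at path `p`: all leaves of `t`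
whose path extends `p`. -/
def descLeaves (t : RBT) (p : List Bool) : List (List Bool) :=
  t.leafPaths.filter (fun q => p.isPrefixOf q)

/-- There are as many leaf paths as leaves. -/
theorem length_leafPaths : ∀ t : RBT, t.leafPaths.length = t.numLeaves
  | leaf => rfl
  | node l r => by
    simp [leafPaths, numLeaves, length_leafPaths l, length_leafPaths r]

end RBT

namespace RBTAux
open RBT

lemma one_le_numLeaves : ∀ t : RBT, 1 ≤ t.numLeaves
  | .leaf => le_refl 1
  | .node l r => le_trans (one_le_numLeaves l) (Nat.le_add_right _ _)

lemma nodup_leafPaths : ∀ t : RBT, t.leafPaths.Nodup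
  | .leaf => List.nodup_singleton _
  | .node l r => by
    refine List.Nodup.append ?_ ?_ ?_
    · exact (nodup_leafPaths l).map (fun a b h => by simpa using h)
    · exact (nodup_leafPaths r).map (fun a b h => by simpa using h)
    · intro x hx hy
      simp only [List.mem_map] at hx hy
      obtain ⟨p, -, rfl⟩ := hx
      obtain ⟨q, -, h⟩ := hy
      simp at h

lemma descLeaves_nil (t : RBT) : t.descLeaves [] = t.leafPaths := by
  simp [descLeaves]

lemma descLeaves_cons (l r : RBT) (b : Bool) (p : List Bool) :
    (RBT.node l r).descLeaves (b :: p) =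
      ((if b then r else l).descLeaves p).map (b :: ·) := by
  cases b <;>
    simp [descLeaves, leafPaths, List.filter_append, List.filter_map,
      Function.comp_def, List.isPrefixOf_cons₂, List.filter_eq_nil_iff]

lemma length_descLeaves_le (t : RBT) (p : List Bool) :
    (t.descLeaves p).length ≤ t.leafPaths.length :=
  List.length_filter_le _ _

lemma mem_descLeaves {t : RBT} {p q : List Bool} :
    q ∈ t.descLeaves p ↔ q ∈ t.leafPaths ∧ p <+: q := by
  simp [descLeaves, List.mem_filter]

lemma one_le_length_descLeaves :
    ∀ t : RBT, ∀ v ∈ t.vertexPaths, 1 ≤ (t.descLeaves v).length := by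
  intro t
  induction t with
  | leaf => intro v hv; simp [vertexPaths] at hv; subst hv; simp [descLeaves_nil, leafPaths]
  | node l r ihl ihr =>
    intro v hv
    simp only [vertexPaths, List.mem_cons, List.mem_append, List.mem_map] at hv
    rcases hv with rfl | ⟨p, hp, rfl⟩ | ⟨p, hp, rfl⟩
    · rw [descLeaves_nil, length_leafPaths]
      exact le_trans (one_le_numLeaves l) (Nat.le_add_right _ _)
    · rw [descLeaves_cons l r false p]; simpa using ihl p hp
    · rw [descLeaves_cons l r true p]; simpa using ihr p hp

lemma length_descLeaves_lt :
    ∀ t : RBT, ∀ v ∈ t.vertexPaths, ∀ w ∈ t.vertexPaths, v ≠ w → v <+: w →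
      (t.descLeaves w).length < (t.descLeaves v).length := by
  intro t
  induction t with
  | leaf =>
    intro v hv w hw hne _
    simp [vertexPaths] at hv hw; subst hv; subst hw; exact absurd rfl hne
  | node l r ihl ihr =>
    intro v hv w hw hne hpre
    simp only [vertexPaths, List.mem_cons, List.mem_append, List.mem_map] at hv hw
    rcases hv with rfl | ⟨p, hp, rfl⟩ | ⟨p, hp, rfl⟩
    · -- v = [], w ≠ []
      rcases hw with rfl | ⟨q, hq, rfl⟩ | ⟨q, hq, rfl⟩
      · exact absurd rfl hne
      · rw [descLeaves_nil, descLeaves_cons l r false q, length_leafPaths]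
        simp only [List.length_map, numLeaves]
        calc (l.descLeaves q).length ≤ l.leafPaths.length := length_descLeaves_le l q
        _ = l.numLeaves := length_leafPaths l
        _ < l.numLeaves + r.numLeaves := by
              have := one_le_numLeaves r; omega
      · rw [descLeaves_nil, descLeaves_cons l r true q, length_leafPaths]
        simp only [List.length_map, numLeaves]
        calc (r.descLeaves q).length ≤ r.leafPaths.length := length_descLeaves_le r q
        _ = r.numLeaves := length_leafPaths r
        _ < l.numLeaves + r.numLeaves := by
              have := one_le_numLeaves l; omega
    · -- v = false :: p
      rcases hw with rfl | ⟨q, hq, rfl⟩ | ⟨q, hq, rfl⟩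
      · exact absurd (List.prefix_nil.mp hpre) (by simp)
      · rw [descLeaves_cons l r false p, descLeaves_cons l r false q]
        simp only [List.length_map]
        exact ihl p hp q hq (by simpa using hne) ((List.cons_prefix_cons.mp hpre).2)
      · exact absurd (List.cons_prefix_cons.mp hpre).1 (by simp)
    · rcases hw with rfl | ⟨q, hq, rfl⟩ | ⟨q, hq, rfl⟩
      · exact absurd (List.prefix_nil.mp hpre) (by simp)
      · exact absurd (List.cons_prefix_cons.mp hpre).1 (by simp)
      · rw [descLeaves_cons l r true p, descLeaves_cons l r true q]
        simp only [List.length_map]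
        exact ihr p hp q hq (by simpa using hne) ((List.cons_prefix_cons.mp hpre).2)

lemma descLeaves_disjoint (t : RBT) {v w : List Bool}
    (hv : v ∈ t.vertexPaths) (hw : w ∈ t.vertexPaths)
    (hlen : (t.descLeaves v).length = (t.descLeaves w).length) (hne : v ≠ w) :
    ∀ q, q ∈ t.descLeaves v → q ∉ t.descLeaves w := by
  intro q hqv hqw
  rw [mem_descLeaves] at hqv hqw
  rcases List.prefix_or_prefix_of_prefix hqv.2 hqw.2 with h | h
  · have := length_descLeaves_lt t v hv w hw hne h; omega
  · have := length_descLeaves_lt t w hw v hv (Ne.symm hne) h; omega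

end RBTAux

open Finset

lemma card_perm_fixing {α : Type*} [Fintype α] [DecidableEq α] (D : Finset α) :
    (univ.filter (fun π : Equiv.Perm α => ∀ x ∈ D, π x = x)).card
      = Nat.factorial (Fintype.card α - D.card) := by
  rw [← Fintype.card_subtype]
  have e : {π : Equiv.Perm α // ∀ x ∈ D, π x = x} ≃ Equiv.Perm {x : α // x ∉ D} :=
    ((Equiv.Perm.subtypeEquivSubtypePerm (fun x => x ∉ D)).trans
      (Equiv.subtypeEquivRight (fun f => by simp))).symm
  rw [Fintype.card_congr e, Fintype.card_perm, Fintype.card_subtype_compl, Fintype.card_coe]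

lemma card_perm_mapsTo_le {α : Type*} [Fintype α] [DecidableEq α] (D B : Finset α) :
    (univ.filter (fun σ : Equiv.Perm α => ∀ x ∈ D, σ x ∈ B)).card
      ≤ B.card.descFactorial D.card * Nat.factorial (Fintype.card α - D.card) := by
  classical
  set E := univ.filter (fun σ : Equiv.Perm α => ∀ x ∈ D, σ x ∈ B) with hEdef
  rcases E.eq_empty_or_nonempty with hE | hE
  · simp [hE]
  obtain ⟨σ₁, hσ₁⟩ := hE
  rcases D.eq_empty_or_nonempty with rfl | hD
  · simp only [Finset.card_empty, Nat.descFactorial_zero, one_mul, Nat.sub_zero]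
    calc E.card ≤ (univ : Finset (Equiv.Perm α)).card := Finset.card_filter_le _ _
    _ = Nat.factorial (Fintype.card α) := by rw [Finset.card_univ, Fintype.card_perm]
  have hB : B.Nonempty := by
    obtain ⟨x, hx⟩ := hD
    exact ⟨σ₁ x, (Finset.mem_filter.mp hσ₁).2 x hx⟩
  haveI : Nonempty {x // x ∈ B} := ⟨⟨hB.choose, hB.choose_spec⟩⟩
  set Φ : Equiv.Perm α → (α → α) := fun σ x => if x ∈ D then σ x else x with hΦ
  rw [Finset.card_eq_sum_card_fiberwise
    (f := Φ) (t := E.image Φ) (fun σ hσ => Finset.mem_image_of_mem _ hσ)]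
  have hfiber : ∀ f ∈ E.image Φ,
      (E.filter (fun σ => Φ σ = f)).card ≤ Nat.factorial (Fintype.card α - D.card) := by
    intro f hf
    obtain ⟨σ₀, hσ₀E, hσ₀⟩ := Finset.mem_image.mp hf
    rw [← card_perm_fixing D]
    apply Finset.card_le_card_of_injOn (fun σ => σ₀⁻¹ * σ)
    · intro σ hσ
      simp only [Finset.mem_coe, Finset.mem_filter, Finset.mem_univ, true_and]
      intro x hx
      have h1 : Φ σ x = Φ σ₀ x := by
        rw [(Finset.mem_filter.mp hσ).2, hσ₀]
      simp only [hΦ, if_pos hx] at h1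
      simp [Equiv.Perm.mul_apply, h1]
    · intro σ hσ σ' hσ' h
      exact mul_left_cancel h
  calc ∑ f ∈ E.image Φ, (E.filter (fun σ => Φ σ = f)).card
      ≤ (E.image Φ).card * Nat.factorial (Fintype.card α - D.card) := by
        simpa using Finset.sum_le_card_nsmul _ _ _ hfiber
    _ ≤ B.card.descFactorial D.card * Nat.factorial (Fintype.card α - D.card) := by
        apply Nat.mul_le_mul_right
        -- bound the number of distinct restrictions
        have hcard : (univ.filter
            (fun g : {x // x ∈ D} → {x // x ∈ B} => Function.Injective g)).card
            = B.card.descFactorial D.card := by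
          rw [← Fintype.card_subtype,
            Fintype.card_congr (Equiv.subtypeInjectiveEquivEmbedding _ _),
            Fintype.card_embedding_eq, Fintype.card_coe, Fintype.card_coe]
        rw [← hcard]
        apply Finset.card_le_card_of_injOn
          (fun f (x : {x // x ∈ D}) =>
            if h : f x.1 ∈ B then (⟨f x.1, h⟩ : {x // x ∈ B}) else Classical.arbitrary _)
        · intro f hf
          obtain ⟨σ, hσE, rfl⟩ := Finset.mem_image.mp hf
          simp only [Finset.mem_coe, Finset.mem_filter, Finset.mem_univ, true_and]
          intro x y hxy
          have hx : Φ σ x.1 ∈ B := by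
            simp only [hΦ, if_pos x.2]; exact (Finset.mem_filter.mp hσE).2 x.1 x.2
          have hy : Φ σ y.1 ∈ B := by
            simp only [hΦ, if_pos y.2]; exact (Finset.mem_filter.mp hσE).2 y.1 y.2
          simp only [dif_pos hx, dif_pos hy] at hxy
          have h2 : Φ σ x.1 = Φ σ y.1 := congrArg Subtype.val hxy
          simp only [hΦ, if_pos x.2, if_pos y.2] at h2
          exact Subtype.ext (σ.injective h2)
        · intro f hf g hg h
          obtain ⟨σ, hσE, rfl⟩ := Finset.mem_image.mp hf
          obtain ⟨σ', hσ'E, rfl⟩ := Finset.mem_image.mp hg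
          funext x
          by_cases hx : x ∈ D
          · have hfx : Φ σ x ∈ B := by
              simp only [hΦ, if_pos hx]; exact (Finset.mem_filter.mp hσE).2 x hx
            have hgx : Φ σ' x ∈ B := by
              simp only [hΦ, if_pos hx]; exact (Finset.mem_filter.mp hσ'E).2 x hx
            have := congrFun h ⟨x, hx⟩
            simp only [dif_pos hfx, dif_pos hgx] at this
            exact congrArg Subtype.val this
          · simp only [hΦ, if_neg hx]

/-- Leaf positions of a tree with `N` leaves are indexed by `Fin T.leafPaths.length`
(a set of size `N`), and a uniformly random labeling assigns to the leaf at index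
`j` the label `(σ j : ℕ) + 1 ∈ {1, …, N}`, where `σ` is a uniformly random
permutation.  For pairwise disjoint sets `A₁, …, A_k ⊆ {1, …, N}` with
`|A_i| = a_i` and any `n ≥ 1`, the probability that some vertex of `T` with at
least `n` descendant leaves has all its descendant leaves labeled within a single
`A_i` is at most `∑_{i=1}^{k} ∑_{m=n}^{a_i} choose(a_i, m) / choose(N-1, m-1)`. -/
theorem prob_monochromatic_clade (T : RBT) (N : ℕ) (hN : T.numLeaves = N)
    (k : ℕ) (A : Fin k → Finset ℕ) (hA : ∀ i, A i ⊆ Finset.Icc 1 N)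
    (hdisj : ∀ i j, i ≠ j → Disjoint (A i) (A j))
    (a : Fin k → ℕ) (ha : ∀ i, (A i).card = a i)
    (n : ℕ) (hn : 1 ≤ n) :
    ((Finset.univ.filter (fun σ : Equiv.Perm (Fin T.leafPaths.length) =>
        ∃ v ∈ T.vertexPaths, n ≤ (T.descLeaves v).length ∧
          ∃ i : Fin k, ∀ j : Fin T.leafPaths.length,
            T.leafPaths.get j ∈ T.descLeaves v → ((σ j : ℕ) + 1) ∈ A i)).card : ℝ) /
        (Fintype.card (Equiv.Perm (Fin T.leafPaths.length)) : ℝ) ≤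
      ∑ i : Fin k, ∑ m ∈ Finset.Icc n (a i),
        ((a i).choose m : ℝ) / ((N - 1).choose (m - 1) : ℝ) := by
  classical
  set M := T.leafPaths.length with hMdef
  have hM : M = N := by rw [hMdef, RBT.length_leafPaths, hN]
  have hN1 : 1 ≤ N := hN ▸ RBTAux.one_le_numLeaves T
  -- index sets and label sets
  set D : List Bool → Finset (Fin M) :=
    fun v => Finset.univ.filter (fun j => T.leafPaths.get j ∈ T.descLeaves v) with hDdef
  set B : Fin k → Finset (Fin M) :=
    fun i => Finset.univ.filter (fun x => ((x : ℕ) + 1) ∈ A i) with hBdef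
  set E : List Bool → Fin k → Finset (Equiv.Perm (Fin M)) :=
    fun v i => Finset.univ.filter (fun σ => ∀ x ∈ D v, σ x ∈ B i) with hEdef
  have hDcard : ∀ v, (D v).card = (T.descLeaves v).length := by
    intro v
    have hnd : (T.descLeaves v).Nodup := (RBTAux.nodup_leafPaths T).filter _
    rw [← List.toFinset_card_of_nodup hnd]
    apply Finset.card_bij (fun j _ => T.leafPaths.get j)
    · intro j hj
      rw [List.mem_toFinset]
      exact (Finset.mem_filter.mp hj).2
    · intro j hj j' hj' h
      exact (List.nodup_iff_injective_get.mp (RBTAux.nodup_leafPaths T)) h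
    · intro q hq
      rw [List.mem_toFinset] at hq
      obtain ⟨j, hj⟩ := List.mem_iff_get.mp (RBTAux.mem_descLeaves.mp hq).1
      exact ⟨j, Finset.mem_filter.mpr ⟨Finset.mem_univ _, hj ▸ hq⟩, hj⟩
  have hDle : ∀ v, (D v).card ≤ M := by
    intro v
    calc (D v).card ≤ (Finset.univ : Finset (Fin M)).card := Finset.card_filter_le _ _
    _ = M := by rw [Finset.card_univ, Fintype.card_fin]
  have hBcard : ∀ i, (B i).card = a i := by
    intro i
    rw [← ha i]
    apply Finset.card_bij (s := B i) (t := A i) (fun x _ => (x : ℕ) + 1)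
    · intro x hx
      exact (Finset.mem_filter.mp hx).2
    · intro x hx y hy h
      exact Fin.ext (by omega)
    · intro y hy
      have h1 := Finset.mem_Icc.mp (hA i hy)
      refine ⟨⟨y - 1, by omega⟩, Finset.mem_filter.mpr ⟨Finset.mem_univ _, ?_⟩, by simp; omega⟩
      simpa using (by simpa using (show y - 1 + 1 = y by omega) ▸ hy : (y - 1 + 1) ∈ A i)
  -- the set of relevant vertices
  set V : Finset (List Bool) :=
    T.vertexPaths.toFinset.filter (fun v => n ≤ (T.descLeaves v).length) with hVdef
  -- union bound
  set S := (Finset.univ.filter (fun σ : Equiv.Perm (Fin M) =>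
      ∃ v ∈ T.vertexPaths, n ≤ (T.descLeaves v).length ∧
        ∃ i : Fin k, ∀ j : Fin M,
          T.leafPaths.get j ∈ T.descLeaves v → ((σ j : ℕ) + 1) ∈ A i)) with hSdef
  have hsub : S ⊆ V.biUnion (fun v => Finset.univ.biUnion (fun i => E v i)) := by
    intro σ hσ
    obtain ⟨v, hv, hlen, i, hall⟩ := (Finset.mem_filter.mp hσ).2
    refine Finset.mem_biUnion.mpr ⟨v, Finset.mem_filter.mpr ⟨List.mem_toFinset.mpr hv, hlen⟩,
      Finset.mem_biUnion.mpr ⟨i, Finset.mem_univ _, ?_⟩⟩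
    refine Finset.mem_filter.mpr ⟨Finset.mem_univ _, fun x hx => ?_⟩
    exact Finset.mem_filter.mpr ⟨Finset.mem_univ _, hall x (Finset.mem_filter.mp hx).2⟩
  have hScard : S.card ≤ ∑ v ∈ V, ∑ i : Fin k, (E v i).card := by
    refine (Finset.card_le_card hsub).trans (Finset.card_biUnion_le.trans ?_)
    exact Finset.sum_le_sum (fun v _ => Finset.card_biUnion_le)
  -- real-number setup
  have hfacpos : (0 : ℝ) < (M.factorial : ℝ) := by exact_mod_cast M.factorial_pos
  have hEbound : ∀ v i, ((E v i).card : ℝ) / (M.factorial : ℝ) ≤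
      ((a i).choose ((D v).card) : ℝ) / (M.choose ((D v).card) : ℝ) := by
    intro v i
    set m := (D v).card with hm
    have hmM : m ≤ M := hDle v
    have hcpos : (0 : ℝ) < (M.choose m : ℝ) := by exact_mod_cast Nat.choose_pos hmM
    have h1 : (E v i).card ≤ (a i).descFactorial m * (M - m).factorial := by
      have := card_perm_mapsTo_le (D v) (B i)
      rw [hBcard i, Fintype.card_fin, ← hm] at this
      simp only [hEdef]
      convert this using 2
      congr!
    have h2 : ((a i).descFactorial m * (M - m).factorial) * M.choose m
        = (a i).choose m * M.factorial := by
      rw [Nat.descFactorial_eq_factorial_mul_choose]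
      rw [← Nat.choose_mul_factorial_mul_factorial hmM]
      ring
    rw [div_le_div_iff₀ hfacpos hcpos]
    calc ((E v i).card : ℝ) * (M.choose m : ℝ)
        ≤ (((a i).descFactorial m * (M - m).factorial : ℕ) : ℝ) * (M.choose m : ℝ) := by
          exact mul_le_mul_of_nonneg_right (by exact_mod_cast h1) (le_of_lt hcpos)
      _ = ((a i).choose m : ℝ) * (M.factorial : ℝ) := by exact_mod_cast congrArg Nat.cast h2
  -- per-i fiberwise bound
  have hperi : ∀ i : Fin k,
      ∑ v ∈ V, ((a i).choose ((D v).card) : ℝ) / (M.choose ((D v).card) : ℝ) ≤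
        ∑ m ∈ Finset.Icc n (a i), ((a i).choose m : ℝ) / ((N - 1).choose (m - 1) : ℝ) := by
    intro i
    have hmaps : ∀ v ∈ V, (D v).card ∈ Finset.Icc n M := by
      intro v hv
      rw [Finset.mem_Icc, hDcard v]
      exact ⟨(Finset.mem_filter.mp hv).2, hDcard v ▸ hDle v⟩
    rw [← Finset.sum_fiberwise_of_maps_to hmaps
      (fun v => ((a i).choose ((D v).card) : ℝ) / (M.choose ((D v).card) : ℝ))]
    have hstep : ∀ m ∈ Finset.Icc n M,
        (∑ v ∈ V.filter (fun v => (D v).card = m),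
          ((a i).choose ((D v).card) : ℝ) / (M.choose ((D v).card) : ℝ)) ≤
        ((a i).choose m : ℝ) / ((N - 1).choose (m - 1) : ℝ) := by
      intro m hm
      obtain ⟨hnm, hmM⟩ := Finset.mem_Icc.mp hm
      have hm1 : 1 ≤ m := le_trans hn hnm
      set Vm := V.filter (fun v => (D v).card = m) with hVm
      have hsum : ∑ v ∈ Vm, ((a i).choose ((D v).card) : ℝ) / (M.choose ((D v).card) : ℝ)
          = (Vm.card : ℝ) * (((a i).choose m : ℝ) / (M.choose m : ℝ)) := by
        rw [Finset.sum_congr rfl (fun v hv => by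
          rw [(Finset.mem_filter.mp hv).2]), Finset.sum_const, nsmul_eq_mul]
      rw [hsum]
      -- counting: the D v for v ∈ Vm are pairwise disjoint of size m
      have hdisjD : ∀ v ∈ Vm, ∀ w ∈ Vm, v ≠ w → Disjoint (D v) (D w) := by
        intro v hv w hw hvw
        have hvV := Finset.mem_filter.mp (Finset.mem_filter.mp hv).1
        have hwV := Finset.mem_filter.mp (Finset.mem_filter.mp hw).1
        have hvP := List.mem_toFinset.mp hvV.1
        have hwP := List.mem_toFinset.mp hwV.1
        have hlen : (T.descLeaves v).length = (T.descLeaves w).length := by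
          rw [← hDcard v, ← hDcard w, (Finset.mem_filter.mp hv).2,
            (Finset.mem_filter.mp hw).2]
        rw [Finset.disjoint_left]
        intro j hjv hjw
        exact RBTAux.descLeaves_disjoint T hvP hwP hlen hvw _
          (Finset.mem_filter.mp hjv).2 (Finset.mem_filter.mp hjw).2
      have hcount : Vm.card * m ≤ M := by
        calc Vm.card * m = ∑ v ∈ Vm, (D v).card := by
              rw [Finset.sum_congr rfl (fun v hv => (Finset.mem_filter.mp hv).2),
                Finset.sum_const, smul_eq_mul]
          _ = (Vm.biUnion D).card := (Finset.card_biUnion hdisjD).symm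
          _ ≤ (Finset.univ : Finset (Fin M)).card := Finset.card_le_univ _
          _ = M := by rw [Finset.card_univ, Fintype.card_fin]
      -- binomial identity
      have hid : N * (N - 1).choose (m - 1) = N.choose m * m := by
        have := Nat.add_one_mul_choose_eq (N - 1) (m - 1)
        have e1 : N - 1 + 1 = N := by omega
        have e2 : m - 1 + 1 = m := by omega
        rwa [e1, e2] at this
      have hcnat : Vm.card * (N - 1).choose (m - 1) ≤ N.choose m := by
        apply Nat.le_of_mul_le_mul_right _ (show 0 < m by omega)
        calc Vm.card * (N - 1).choose (m - 1) * m
            = Vm.card * m * (N - 1).choose (m - 1) := by ring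
          _ ≤ N * (N - 1).choose (m - 1) := Nat.mul_le_mul_right _ (hM ▸ hcount)
          _ = N.choose m * m := hid
      have hcpos : (0 : ℝ) < (M.choose m : ℝ) := by exact_mod_cast Nat.choose_pos hmM
      have hc'pos : (0 : ℝ) < ((N - 1).choose (m - 1) : ℝ) := by
        exact_mod_cast Nat.choose_pos (by omega : m - 1 ≤ N - 1)
      rw [mul_div_assoc', div_le_div_iff₀ hcpos hc'pos]
      have hAnn : (0 : ℝ) ≤ ((a i).choose m : ℝ) := by positivity
      calc (Vm.card : ℝ) * ((a i).choose m : ℝ) * ((N - 1).choose (m - 1) : ℝ)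
          = ((a i).choose m : ℝ) * ((Vm.card : ℝ) * ((N - 1).choose (m - 1) : ℝ)) := by ring
        _ ≤ ((a i).choose m : ℝ) * (N.choose m : ℝ) := by
            apply mul_le_mul_of_nonneg_left _ hAnn
            exact_mod_cast hcnat
        _ = ((a i).choose m : ℝ) * (M.choose m : ℝ) := by rw [hM]
    refine le_trans (Finset.sum_le_sum hstep) ?_
    -- shrink the index set from Icc n M to Icc n (a i)
    have haN : a i ≤ M := by
      rw [hM, ← ha i]
      calc (A i).card ≤ (Finset.Icc 1 N).card := Finset.card_le_card (hA i)
        _ = N := by rw [Nat.card_Icc]; omega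
    rw [Finset.sum_subset (Finset.Icc_subset_Icc_right haN)]
    intro m hm hnm
    have : a i < m := by
      rw [Finset.mem_Icc] at hm
      rw [Finset.mem_Icc] at hnm
      omega
    rw [Nat.choose_eq_zero_of_lt this]
    simp
  -- put everything together
  have hperm : (Fintype.card (Equiv.Perm (Fin M)) : ℝ) = (M.factorial : ℝ) := by
    rw [Fintype.card_perm, Fintype.card_fin]
  rw [hperm]
  calc (S.card : ℝ) / (M.factorial : ℝ)
      ≤ ((∑ v ∈ V, ∑ i : Fin k, (E v i).card : ℕ) : ℝ) / (M.factorial : ℝ) := by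
        apply div_le_div_of_nonneg_right ?_ hfacpos.le
        exact_mod_cast hScard
    _ = ∑ v ∈ V, ∑ i : Fin k, ((E v i).card : ℝ) / (M.factorial : ℝ) := by
        push_cast
        rw [Finset.sum_div]
        exact Finset.sum_congr rfl (fun v _ => by rw [Finset.sum_div])
    _ ≤ ∑ v ∈ V, ∑ i : Fin k,
          ((a i).choose ((D v).card) : ℝ) / (M.choose ((D v).card) : ℝ) :=
        Finset.sum_le_sum (fun v _ => Finset.sum_le_sum (fun i _ => hEbound v i))
    _ = ∑ i : Fin k, ∑ v ∈ V,
          ((a i).choose ((D v).card) : ℝ) / (M.choose ((D v).card) : ℝ) :=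
        Finset.sum_comm
    _ ≤ ∑ i : Fin k, ∑ m ∈ Finset.Icc n (a i),
          ((a i).choose m : ℝ) / ((N - 1).choose (m - 1) : ℝ) :=
        Finset.sum_le_sum (fun i _ => hperi i)
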